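/- Let p₁ < p₂ be prime numbers and f(x) = (p₁x − 1)(p₂x − 1)·x ∈ ℤ[x]. Then the map f : ℤ → ℤ is injective, but for every prime p the induced map f : ℤ₍ₚ₎ → ℤ₍ₚ₎ on the localization of ℤ at p is not injective. -/

import Mathlib

/-- Let `p₁ < p₂` be primes and `f(x) = (p₁x − 1)(p₂x − 1)·x`. Then `f : ℤ → ℤ` is
injective, but for every prime `p` the induced map on the localization
`ℤ₍ₚ₎ = { a/b ∈ ℚ : p ∤ b }` of `ℤ` at `p` is not injective. -/
theorem stmt_18 (p₁ p₂ : ℕ) (hp₁ : p₁.Prime) (hp₂ : p₂.Prime) (hlt : p₁ < p₂) :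
    Function.Injective
        (fun a : ℤ => ((p₁ : ℤ) * a - 1) * ((p₂ : ℤ) * a - 1) * a) ∧
      ∀ p : ℕ, p.Prime →
        ¬ Set.InjOn (fun x : ℚ => ((p₁ : ℚ) * x - 1) * ((p₂ : ℚ) * x - 1) * x)
          {x : ℚ | ∃ a b : ℤ, ¬ (p : ℤ) ∣ b ∧ x = (a : ℚ) / (b : ℚ)} := by
  have h1 : (2:ℤ) ≤ (p₁:ℤ) := by exact_mod_cast hp₁.two_le
  have h2 : (3:ℤ) ≤ (p₂:ℤ) := by exact_mod_cast lt_of_le_of_lt hp₁.two_le hlt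
  constructor
  · have hm : StrictMono (fun a : ℤ => ((p₁ : ℤ) * a - 1) * ((p₂ : ℤ) * a - 1) * a) := by
      apply strictMono_int_of_lt_succ
      intro a
      rcases le_or_gt a (-1) with h | h
      · nlinarith [sq_nonneg (a+1), mul_nonneg (mul_nonneg (by linarith : (0:ℤ) ≤ (p₁:ℤ)) (by linarith : (0:ℤ) ≤ (p₂:ℤ))) (sq_nonneg (a+1)), mul_nonneg (by linarith : (0:ℤ) ≤ (p₁:ℤ) + (p₂:ℤ)) (by linarith : (0:ℤ) ≤ -(a+1)), mul_nonneg (mul_nonneg (by linarith : (0:ℤ) ≤ (p₁:ℤ)) (by linarith : (0:ℤ) ≤ (p₂:ℤ))) (by linarith : (0:ℤ) ≤ -(a+1))]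
      · have h0 : 0 ≤ a := by linarith
        nlinarith [mul_nonneg (mul_nonneg (by linarith : (0:ℤ) ≤ (p₁:ℤ)) (by linarith : (0:ℤ) ≤ (p₂:ℤ))) (sq_nonneg a), mul_nonneg (by nlinarith : (0:ℤ) ≤ 3*(p₁:ℤ)*(p₂:ℤ) - 2*(p₁:ℤ) - 2*(p₂:ℤ)) h0, sq_nonneg a]
    exact hm.injective
  · intro p hp hinj
    have hp1 : (0:ℚ) < (p₁:ℚ) := by exact_mod_cast hp₁.pos
    have hp2 : (0:ℚ) < (p₂:ℚ) := by exact_mod_cast hp₂.pos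
    by_cases hpe : p = p₁
    · -- use 0 and 1/p₂
      have hmem : ((1:ℚ)/(p₂:ℚ)) ∈ {x : ℚ | ∃ a b : ℤ, ¬ (p : ℤ) ∣ b ∧ x = (a : ℚ) / (b : ℚ)} := by
        refine ⟨1, (p₂:ℤ), ?_, by push_cast; ring⟩
        intro hdvd
        have : p ∣ p₂ := by exact_mod_cast hdvd
        have := (Nat.prime_dvd_prime_iff_eq hp hp₂).mp this
        omega
      have hmem0 : (0:ℚ) ∈ {x : ℚ | ∃ a b : ℤ, ¬ (p : ℤ) ∣ b ∧ x = (a : ℚ) / (b : ℚ)} := by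
        refine ⟨0, 1, ?_, by norm_num⟩
        intro h
        have hd : p ∣ 1 := by exact_mod_cast h
        have hle := Nat.le_of_dvd one_pos hd
        have := hp.one_lt
        omega
      have := hinj hmem hmem0 (by field_simp; ring)
      have : (0:ℚ) < 1/(p₂:ℚ) := by positivity
      simp_all
    · -- use 0 and 1/p₁
      have hmem : ((1:ℚ)/(p₁:ℚ)) ∈ {x : ℚ | ∃ a b : ℤ, ¬ (p : ℤ) ∣ b ∧ x = (a : ℚ) / (b : ℚ)} := by
        refine ⟨1, (p₁:ℤ), ?_, by push_cast; ring⟩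
        intro hdvd
        have : p ∣ p₁ := by exact_mod_cast hdvd
        exact hpe ((Nat.prime_dvd_prime_iff_eq hp hp₁).mp this)
      have hmem0 : (0:ℚ) ∈ {x : ℚ | ∃ a b : ℤ, ¬ (p : ℤ) ∣ b ∧ x = (a : ℚ) / (b : ℚ)} := by
        refine ⟨0, 1, ?_, by norm_num⟩
        intro h
        have hd : p ∣ 1 := by exact_mod_cast h
        have hle := Nat.le_of_dvd one_pos hd
        have := hp.one_lt
        omega
      have := hinj hmem hmem0 (by field_simp; ring)
      have : (0:ℚ) < 1/(p₁:ℚ) := by positivity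
      simp_all
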